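/- Let K be an algebraically closed field of characteristic 0 and let f be a polynomial of degree d ≥ 2 over K whose fixed-point multipliers λ₁, …, λ_d (with multiplicity) all differ from 1. Then the holomorphic fixed-point formula holds: the sum over j of 1/(1 − λ_j) equals 0. -/

import Mathlib

open Polynomial Finset

lemma leadingCoeff_lagrange_basis {F : Type*} [Field F] {ι : Type*} [DecidableEq ι]
    (s : Finset ι) (v : ι → F) (i : ι) :
    (Lagrange.basis s v i).leadingCoeff = Lagrange.nodalWeight s v i := by
  rw [Lagrange.basis, leadingCoeff_prod, Lagrange.nodalWeight]
  refine Finset.prod_congr rfl fun j _ => ?_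
  rw [Lagrange.basisDivisor]
  rcases eq_or_ne (v i) (v j) with h | h
  · simp [h]
  · rw [leadingCoeff_mul, leadingCoeff_C, leadingCoeff_X_sub_C, mul_one]

lemma sum_nodalWeight_eq_zero {F : Type*} [Field F] {ι : Type*} [DecidableEq ι]
    (s : Finset ι) (v : ι → F) (hvs : Set.InjOn v s) (hs : 2 ≤ s.card) :
    ∑ i ∈ s, Lagrange.nodalWeight s v i = 0 := by
  have hne : s.Nonempty := Finset.card_pos.mp (by omega)
  have h1 := Lagrange.sum_basis hvs hne
  have h2 := congrArg (fun p => Polynomial.coeff p (s.card - 1)) h1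
  simp only [finset_sum_coeff] at h2
  rw [coeff_one] at h2
  rw [if_neg (by omega)] at h2
  rw [← h2]
  refine Finset.sum_congr rfl fun i hi => ?_
  rw [← leadingCoeff_lagrange_basis s v i, Polynomial.leadingCoeff,
    Lagrange.natDegree_basis hvs hi]

theorem stmt_3 {K : Type*} [Field K] [IsAlgClosed K] [CharZero K]
    (f : K[X]) (d : ℕ) (hd : 2 ≤ d) (hdeg : f.natDegree = d)
    (hmult : ∀ z ∈ (f - X).roots, (derivative f).eval z ≠ 1) :
    (((f - X).roots).map fun z => (1 - (derivative f).eval z)⁻¹).sum = 0 := by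
  classical
  set g : K[X] := f - X with hg
  have hgd : g.natDegree = d := by
    rw [hg, natDegree_sub_eq_left_of_natDegree_lt]
    · exact hdeg
    · rw [natDegree_X, hdeg]; omega
  have hg0 : g ≠ 0 := fun h => by simp [h] at hgd; omega
  have hder : derivative g = derivative f - 1 := by
    rw [hg, derivative_sub, derivative_X]
  have hder_ne : ∀ z ∈ g.roots, (derivative g).eval z ≠ 0 := by
    intro z hz
    rw [hder, eval_sub, eval_one, sub_ne_zero]
    exact hmult z hz
  -- roots are simple
  have hnd : g.roots.Nodup := by
    rw [Multiset.nodup_iff_count_le_one]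
    intro z
    by_contra hcon
    push_neg at hcon
    rw [count_roots] at hcon
    have := (one_lt_rootMultiplicity_iff_isRoot hg0).mp hcon
    refine hder_ne z ?_ this.2
    rw [mem_roots hg0]
    exact this.1
  set s : Finset K := g.roots.toFinset with hs
  have hsv : s.val = g.roots := Multiset.Nodup.dedup hnd
  have hvs : Set.InjOn (id : K → K) s := Function.injective_id.injOn
  have hcard : s.card = d := by
    rw [← hgd, Finset.card_def, hsv, ← splits_iff_card_roots.mp (IsAlgClosed.splits g)]
  set c : K := g.leadingCoeff with hc
  have hc0 : c ≠ 0 := leadingCoeff_ne_zero.mpr hg0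
  have hg_eq : g = C c * Lagrange.nodal s id := by
    conv_lhs => rw [(IsAlgClosed.splits g).eq_prod_roots]
    congr 1
    rw [Lagrange.nodal, ← hsv]
    rfl
  -- key evaluation of the derivative at a root
  have hkey : ∀ z ∈ s, (1 - (derivative f).eval z)⁻¹ = -c⁻¹ * Lagrange.nodalWeight s id z := by
    intro z hz
    have hw0 : Lagrange.nodalWeight s id z ≠ 0 := Lagrange.nodalWeight_ne_zero hvs hz
    have hwe : Lagrange.nodalWeight s id z =
        (eval (id z) (derivative (Lagrange.nodal s id)))⁻¹ :=
      Lagrange.nodalWeight_eq_eval_derivative_nodal hz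
    have he : eval z (derivative (Lagrange.nodal s id)) = (Lagrange.nodalWeight s id z)⁻¹ := by
      rw [hwe, inv_inv]; rfl
    have hgz : (derivative g).eval z = c * (Lagrange.nodalWeight s id z)⁻¹ := by
      rw [hg_eq, derivative_C_mul, eval_mul, eval_C, he]
    have h1 : 1 - (derivative f).eval z = -((derivative g).eval z) := by
      rw [hder, eval_sub, eval_one]; ring
    rw [h1, hgz]
    rw [inv_neg, mul_inv, inv_inv, neg_mul]
  have hsum : (g.roots.map fun z => (1 - (derivative f).eval z)⁻¹).sum
      = ∑ z ∈ s, (1 - (derivative f).eval z)⁻¹ := by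
    rw [Finset.sum, hsv]
  rw [hsum, Finset.sum_congr rfl hkey, ← Finset.mul_sum,
    sum_nodalWeight_eq_zero s id hvs (by omega), mul_zero]
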